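/- For every s ≥ 3, every n ≥ 1, every m ≥ 2, every m̂ with 1 ≤ m̂ < m, and every partition m = m_1 + ⋯ + m_{m̂} into positive parts, there exist nonnegative integers n̂, ň_1, …, ň_{m̂} with n = n̂ + ň_1 + ⋯ + ň_{m̂} such that λ_s(n,m) ≤ Σ_{q=1}^{m̂} λ_s(ň_q, m_q) + 2·λ_{s−1}(n̂, m) + λ_{s−2}(λ_s(n̂, m̂) − 2·n̂, m). -/

import Mathlib

/-- Alternating list `a b a b ⋯` of the given length. -/
def altList : ℕ → ℕ → ℕ → List ℕ
  | 0, _, _ => []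
  | (k+1), a, b => a :: altList k b a

/-- An order-`s` Davenport–Schinzel sequence: it contains no (not necessarily
contiguous) subsequence `a b a b ⋯` of length `s+2` over two distinct symbols. -/
def IsDS (s : ℕ) (S : List ℕ) : Prop :=
  ∀ a b : ℕ, a ≠ b → ¬ (altList (s + 2) a b).Sublist S

/-- 2-sparse: no two equal adjacent symbols. -/
def Sparse2 (S : List ℕ) : Prop := S.Chain' (· ≠ ·)

/-- `S` can be partitioned into at most `m` blocks
(contiguous runs of pairwise distinct symbols). -/
def Blocked (m : ℕ) (S : List ℕ) : Prop :=
  ∃ Bs : List (List ℕ), Bs.length ≤ m ∧ (∀ B ∈ Bs, B.Nodup) ∧ S = Bs.flatten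

/-- `λ_s(n)`: maximum length of a 2-sparse order-`s` DS sequence over an
alphabet of `n` symbols. -/
noncomputable def lamS (s n : ℕ) : ℕ :=
  sSup {l : ℕ | ∃ S : List ℕ, IsDS s S ∧ Sparse2 S ∧ S.toFinset.card ≤ n ∧ S.length = l}

/-- `λ_s(n,m)`: maximum length of an order-`s` DS sequence over an alphabet of
`n` symbols that can be partitioned into at most `m` blocks. -/
noncomputable def lamB (s n m : ℕ) : ℕ :=
  sSup {l : ℕ | ∃ S : List ℕ, IsDS s S ∧ S.toFinset.card ≤ n ∧ Blocked m S ∧ S.length = l}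

open List

lemma altList_length (k a b : ℕ) : (altList k a b).length = k := by
  induction k generalizing a b with
  | zero => rfl
  | succ k ih => simp [altList, ih]

lemma mem_altList {k a b e : ℕ} (h : e ∈ altList k a b) : e = a ∨ e = b := by
  induction k generalizing a b with
  | zero => simp [altList] at h
  | succ k ih =>
    simp only [altList, mem_cons] at h
    rcases h with h | h
    · exact Or.inl h
    · exact (ih h).symm

lemma altList_succ_eq (k a b : ℕ) :
    altList (k+1) a b = altList k a b ++ [if k % 2 = 0 then a else b] := by
  induction k generalizing a b with
  | zero => rfl
  | succ k ih =>
    show a :: altList (k+1) b a = (a :: altList k b a) ++ _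
    rw [ih]
    have : (k+1) % 2 = 0 ↔ ¬ (k % 2 = 0) := by omega
    rcases Nat.even_or_odd k with hk | hk
    · have h1 : k % 2 = 0 := Nat.even_iff.mp hk
      have h2 : ¬ ((k+1) % 2 = 0) := by omega
      simp [h1, h2]
    · have h1 : ¬ (k % 2 = 0) := by have := Nat.odd_iff.mp hk; omega
      have h2 : (k+1) % 2 = 0 := by have := Nat.odd_iff.mp hk; omega
      simp [h1, h2]

lemma altList_three_prefix {k : ℕ} (hk : 3 ≤ k) (a b : ℕ) :
    [a, b, a] <+ altList k a b := by
  obtain ⟨k', rfl⟩ : ∃ k', k = k' + 3 := ⟨k - 3, by omega⟩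
  show [a,b,a] <+ a :: b :: a :: altList k' b a
  exact (sublist_append_left [a,b,a] (altList k' b a))

-- flatten of pointwise sublists
lemma flatten_sublist_flatten {α : Type*} {L₁ L₂ : List (List α)}
    (h : Forall₂ (· <+ ·) L₁ L₂) : L₁.flatten <+ L₂.flatten := by
  induction h with
  | nil => simp
  | cons h _ ih => exact Sublist.append h ih

lemma range_map_getD {α : Type*} (L : List α) (d : α) :
    (List.range L.length).map (fun i => L.getD i d) = L := by
  apply List.ext_getElem
  · simp
  · intro i h1 h2
    simp [List.getD_eq_getElem?_getD, List.getElem?_eq_getElem h2]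

-- splitting flatten around an index
lemma flatten_eq_three {α : Type*} (Ls : List (List α)) {j : ℕ} (hj : j < Ls.length) :
    Ls.flatten = (Ls.take j).flatten ++ (Ls[j] ++ (Ls.drop (j+1)).flatten) := by
  conv_lhs => rw [← List.take_append_drop j Ls]
  rw [List.flatten_append, List.drop_eq_getElem_cons hj, List.flatten_cons]

lemma sublist_flatten_of_getElem {α : Type*} {Ls : List (List α)} {i : ℕ}
    (hi : i < Ls.length) {x : List α} (hx : x <+ Ls[i]) : x <+ Ls.flatten :=
  hx.trans (sublist_flatten_of_mem (List.getElem_mem hi))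

lemma sublist_flatten_two {α : Type*} {Ls : List (List α)} {i j : ℕ} {x y : List α}
    (hij : i < j) (hj : j < Ls.length) (hx : x <+ Ls[i]) (hy : y <+ Ls[j]) :
    x ++ y <+ Ls.flatten := by
  rw [flatten_eq_three Ls hj]
  refine Sublist.append ?_ (hy.trans (List.sublist_append_left _ _))
  have hi : i < (Ls.take j).length := by simp [List.length_take]; omega
  refine sublist_flatten_of_getElem hi ?_
  have : (Ls.take j)[i] = Ls[i] := List.getElem_take ..
  rwa [this]

lemma sublist_flatten_three {α : Type*} {Ls : List (List α)} {i j k : ℕ} {x y z : List α}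
    (hij : i < j) (hjk : j < k) (hk : k < Ls.length)
    (hx : x <+ Ls[i]) (hy : y <+ Ls[j]) (hz : z <+ Ls[k]) :
    x ++ (y ++ z) <+ Ls.flatten := by
  rw [flatten_eq_three Ls (show j < Ls.length by omega)]
  refine Sublist.append ?_ (Sublist.append hy ?_)
  · have hi : i < (Ls.take j).length := by simp [List.length_take]; omega
    refine sublist_flatten_of_getElem hi ?_
    have : (Ls.take j)[i] = Ls[i] := List.getElem_take ..
    rwa [this]
  · have hk' : k - (j+1) < (Ls.drop (j+1)).length := by simp [List.length_drop]; omega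
    refine sublist_flatten_of_getElem hk' ?_
    have : (Ls.drop (j+1))[k - (j+1)] = Ls[k] := by
      rw [List.getElem_drop]
      congr 1; omega
    rwa [this]

-- a nonempty prefix-part of [x,y,x] contains x ; a nonempty suffix-part contains x
lemma segre_aux_pre {α : Type*} {x y : α} {r₁ r₂ : List α}
    (h : r₁ ++ r₂ = [x, y, x]) (hne : r₁ ≠ []) : x ∈ r₁ := by
  cases r₁ with
  | nil => exact absurd rfl hne
  | cons a t =>
    have : a = x := by
      have := congrArg (fun l => l.head?) h
      simpa using this
    simp [this]

lemma segre_aux_suf {α : Type*} {x y : α} {r₁ r₂ : List α}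
    (h : r₁ ++ r₂ = [x, y, x]) (hne : r₂ ≠ []) : x ∈ r₂ := by
  have hlast : r₂.getLast hne = x := by
    have h1 : (r₁ ++ r₂).getLast (by simp [h]) = x := by
      simp [h]
    rw [List.getLast_append] at h1
    simpa [hne] using h1
  rw [← hlast]; exact List.getLast_mem hne

/-- If all elements of a sublist avoid the outer parts, it is a sublist of the middle. -/
lemma sublist_middle {α : Type*} {l A B C : List α} (h : l <+ A ++ (B ++ C))
    (hA : ∀ e ∈ l, e ∉ A) (hC : ∀ e ∈ l, e ∉ C) : l <+ B := by
  rw [List.sublist_append_iff] at h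
  obtain ⟨l₁, l₂, rfl, h₁, h₂⟩ := h
  rw [List.sublist_append_iff] at h₂
  obtain ⟨l₂a, l₂b, rfl, h₂a, h₂b⟩ := h₂
  have hl₁ : l₁ = [] := by
    cases l₁ with
    | nil => rfl
    | cons a t =>
      exact absurd (h₁.subset List.mem_cons_self) (hA a (by simp))
  have hl₂b : l₂b = [] := by
    cases l₂b with
    | nil => rfl
    | cons a t =>
      exact absurd (h₂b.subset List.mem_cons_self) (hC a (by simp))
  subst hl₁ hl₂b
  simpa using h₂a

/-- Segregation: if values determine their chunk, an alternation of length ≥ 3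
lives entirely within one chunk. -/
lemma segregation {Ls : List (List ℕ)} {g : ℕ → ℕ}
    (hg : ∀ i (hi : i < Ls.length), ∀ e ∈ Ls[i], g e = i)
    {k x y : ℕ} (hk : 3 ≤ k) (h : altList k x y <+ Ls.flatten) :
    ∃ i, ∃ hi : i < Ls.length, g x = i ∧ g y = i ∧ altList k x y <+ Ls[i] := by
  have hxmem : x ∈ Ls.flatten := h.subset (by
    obtain ⟨k', rfl⟩ : ∃ k', k = k' + 1 := ⟨k - 1, by omega⟩
    exact List.mem_cons_self)
  rw [List.mem_flatten] at hxmem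
  obtain ⟨l, hl, hxl⟩ := hxmem
  rw [List.mem_iff_getElem] at hl
  obtain ⟨i, hi, rfl⟩ := hl
  have hgx : g x = i := hg i hi x hxl
  -- x does not occur outside chunk i
  have hxA : x ∉ (Ls.take i).flatten := by
    intro hx
    rw [List.mem_flatten] at hx
    obtain ⟨l', hl', hxl'⟩ := hx
    rw [List.mem_iff_getElem] at hl'
    obtain ⟨i', hi', rfl⟩ := hl'
    have hi'' : i' < i := by simp [List.length_take] at hi'; omega
    have : (Ls.take i)[i'] = Ls[i'] := List.getElem_take ..
    rw [this] at hxl'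
    have := hg i' (by omega) x hxl'
    omega
  have hxC : x ∉ (Ls.drop (i+1)).flatten := by
    intro hx
    rw [List.mem_flatten] at hx
    obtain ⟨l', hl', hxl'⟩ := hx
    rw [List.mem_iff_getElem] at hl'
    obtain ⟨i', hi', rfl⟩ := hl'
    have hlen : (i+1) + i' < Ls.length := by
      simp [List.length_drop] at hi'; omega
    have : (Ls.drop (i+1))[i'] = Ls[(i+1) + i'] := List.getElem_drop ..
    rw [this] at hxl'
    have := hg ((i+1)+i') hlen x hxl'
    omega
  rw [flatten_eq_three Ls hi] at h
  -- first show g y = i, using the [x,y,x] pattern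
  have h3 : [x,y,x] <+ (Ls.take i).flatten ++ (Ls[i] ++ (Ls.drop (i+1)).flatten) :=
    (altList_three_prefix hk x y).trans h
  have hyi : y ∈ Ls[i] := by
    rw [List.sublist_append_iff] at h3
    obtain ⟨r₁, r₂, he, hr₁, hr₂⟩ := h3
    have hr₁nil : r₁ = [] := by
      by_contra hne
      exact hxA (hr₁.subset (segre_aux_pre he.symm hne))
    subst hr₁nil
    simp only [List.nil_append] at he hr₂
    rw [List.sublist_append_iff] at hr₂
    obtain ⟨t₁, t₂, he2, ht₁, ht₂⟩ := hr₂
    have ht₂nil : t₂ = [] := by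
      by_contra hne
      exact hxC (ht₂.subset (segre_aux_suf (he.trans he2).symm hne))
    subst ht₂nil
    have hy : y ∈ t₁ := by
      have h5 : [x,y,x] = t₁ := by simpa using he.trans he2
      rw [← h5]; simp
    exact ht₁.subset hy
  have hgy : g y = i := hg i hi y hyi
  refine ⟨i, hi, hgx, hgy, ?_⟩
  have hmid := sublist_middle h (fun e he => ?_) (fun e he => ?_)
  · exact hmid
  · rcases mem_altList he with rfl | rfl
    · exact hxA
    · intro hyA
      rw [List.mem_flatten] at hyA
      obtain ⟨l', hl', hyl'⟩ := hyA
      rw [List.mem_iff_getElem] at hl'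
      obtain ⟨i', hi', rfl⟩ := hl'
      have hii : i' < i := by simp [List.length_take] at hi'; omega
      have : (Ls.take i)[i'] = Ls[i'] := List.getElem_take ..
      rw [this] at hyl'
      have := hg i' (by omega) e hyl'
      omega
  · rcases mem_altList he with rfl | rfl
    · exact hxC
    · intro hyC
      rw [List.mem_flatten] at hyC
      obtain ⟨l', hl', hyl'⟩ := hyC
      rw [List.mem_iff_getElem] at hl'
      obtain ⟨i', hi', rfl⟩ := hl'
      have hlen : (i+1) + i' < Ls.length := by
        simp [List.length_drop] at hi'; omega
      have : (Ls.drop (i+1))[i'] = Ls[(i+1) + i'] := List.getElem_drop ..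
      rw [this] at hyl'
      have := hg ((i+1)+i') hlen e hyl'
      omega

lemma IsDS.sublist {s : ℕ} {S T : List ℕ} (h : IsDS s S) (hsub : T <+ S) : IsDS s T :=
  fun a b hab hc => h a b hab (hc.trans hsub)

lemma isDS_nil (s : ℕ) : IsDS s [] := by
  intro a b hab hc
  have := hc.length_le
  simp [altList_length] at this

lemma lamB_set_bdd (s n m : ℕ) :
    ∀ l ∈ {l : ℕ | ∃ S : List ℕ, IsDS s S ∧ S.toFinset.card ≤ n ∧ Blocked m S ∧ S.length = l},
      l ≤ n * m := by
  rintro l ⟨S, _, hcard, ⟨Bs, hlen, hnd, rfl⟩, rfl⟩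
  rw [List.length_flatten]
  have hble : ∀ x ∈ Bs.map List.length, x ≤ n := by
    rintro x hx
    rw [List.mem_map] at hx
    obtain ⟨B, hB, rfl⟩ := hx
    have h1 : B.toFinset.card = B.length := by
      rw [List.card_toFinset, List.Nodup.dedup (hnd B hB)]
    have h2 : B.toFinset ⊆ Bs.flatten.toFinset := by
      intro a ha
      rw [List.mem_toFinset] at ha ⊢
      exact List.mem_flatten.mpr ⟨B, hB, ha⟩
    calc B.length = B.toFinset.card := h1.symm
      _ ≤ Bs.flatten.toFinset.card := Finset.card_le_card h2
      _ ≤ n := hcard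
  calc (Bs.map List.length).sum ≤ (Bs.map List.length).length • n :=
        List.sum_le_card_nsmul _ _ hble
    _ = Bs.length * n := by simp [mul_comm]
    _ ≤ n * m := by rw [mul_comm]; exact Nat.mul_le_mul_left n hlen

lemma le_lamB {s n m : ℕ} {S : List ℕ} (h1 : IsDS s S) (h2 : S.toFinset.card ≤ n)
    (h3 : Blocked m S) : S.length ≤ lamB s n m :=
  le_csSup ⟨n * m, fun l hl => lamB_set_bdd s n m l hl⟩ ⟨S, h1, h2, h3, rfl⟩

lemma lamB_attained (s n m : ℕ) :
    ∃ S : List ℕ, IsDS s S ∧ S.toFinset.card ≤ n ∧ Blocked m S ∧ S.length = lamB s n m := by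
  have hne : {l : ℕ | ∃ S : List ℕ, IsDS s S ∧ S.toFinset.card ≤ n ∧ Blocked m S ∧
      S.length = l}.Nonempty :=
    ⟨0, [], isDS_nil s, by simp, ⟨[], by simp⟩, rfl⟩
  have hbdd : BddAbove {l : ℕ | ∃ S : List ℕ, IsDS s S ∧ S.toFinset.card ≤ n ∧ Blocked m S ∧
      S.length = l} := ⟨n * m, fun l hl => lamB_set_bdd s n m l hl⟩
  exact Nat.sSup_mem hne hbdd

def splitSz {α : Type*} : List ℕ → List α → List (List α)
  | [], _ => []
  | k :: ks, l => l.take k :: splitSz ks (l.drop k)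

lemma splitSz_length {α : Type*} (ks : List ℕ) (l : List α) :
    (splitSz ks l).length = ks.length := by
  induction ks generalizing l with
  | nil => rfl
  | cons k ks ih => simp [splitSz, ih]

lemma splitSz_flatten {α : Type*} (ks : List ℕ) (l : List α) (h : ks.sum = l.length) :
    (splitSz ks l).flatten = l := by
  induction ks generalizing l with
  | nil =>
    simp at h
    simp [splitSz, List.eq_nil_of_length_eq_zero h.symm]
  | cons k ks ih =>
    simp only [splitSz, List.flatten_cons]
    rw [ih _ (by simp at h; simp [List.length_drop]; omega)]
    exact List.take_append_drop k l

lemma splitSz_getElem_length {α : Type*} (ks : List ℕ) (l : List α) (h : ks.sum ≤ l.length)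
    (i : ℕ) (hi : i < ks.length) :
    ((splitSz ks l)[i]'(by rw [splitSz_length]; exact hi)).length = ks[i] := by
  induction ks generalizing l i with
  | nil => simp at hi
  | cons k ks ih =>
    cases i with
    | zero =>
      show (l.take k).length = k
      simp at h
      simp [List.length_take]; omega
    | succ i =>
      show ((splitSz ks (l.drop k))[i]'_).length = _
      have := ih (l.drop k) (by simp at h ⊢; omega) i (by simpa using hi)
      simpa using this

lemma countP_or_le (p q : ℕ → Bool) (l : List ℕ) :
    l.countP (fun a => p a || q a) ≤ l.countP p + l.countP q := by
  induction l with
  | nil => simp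
  | cons a l ih =>
    by_cases hp : p a <;> by_cases hq : q a <;>
      simp [List.countP_cons, hp, hq] <;> omega

lemma card_toFinset_flatten_le (L : List (List ℕ)) :
    L.flatten.toFinset.card ≤ (L.map (fun l => l.toFinset.card)).sum := by
  induction L with
  | nil => simp
  | cons l L ih =>
    simp only [List.flatten_cons, List.toFinset_append, List.map_cons, List.sum_cons]
    calc (l.toFinset ∪ L.flatten.toFinset).card
        ≤ l.toFinset.card + L.flatten.toFinset.card := Finset.card_union_le _ _
      _ ≤ _ := by omega

lemma toFinset_map_card_le (f : ℕ → ℕ) (l : List ℕ) :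
    (l.map f).toFinset.card ≤ l.toFinset.card := by
  have h : (l.map f).toFinset = l.toFinset.image f := by
    ext a; simp [List.mem_toFinset, eq_comm]
  rw [h]
  exact Finset.card_image_le

attribute [local instance] Classical.propDecidable

section DSAux

/-- chunk `q` of the chunk list `Ts`. -/
def Tc (Ts : List (List ℕ)) (q : ℕ) : List ℕ := Ts.getD q []

lemma mem_Tc_lt {Ts : List (List ℕ)} {a q : ℕ} (h : a ∈ Tc Ts q) : q < Ts.length := by
  by_contra hq
  rw [Tc, List.getD_eq_default _ _ (by omega)] at h
  simp at h

lemma Tc_eq_getElem {Ts : List (List ℕ)} {q : ℕ} (h : q < Ts.length) : Tc Ts q = Ts[q] :=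
  List.getD_eq_getElem _ _ h

/-- set of chunks containing `a`. -/
noncomputable def QsF (Ts : List (List ℕ)) (a : ℕ) : Finset ℕ :=
  (Finset.range Ts.length).filter (fun q => a ∈ Tc Ts q)

lemma mem_QsF {Ts : List (List ℕ)} {a q : ℕ} : q ∈ QsF Ts a ↔ a ∈ Tc Ts q := by
  constructor
  · intro h; exact (Finset.mem_filter.mp h).2
  · intro h; exact Finset.mem_filter.mpr ⟨Finset.mem_range.mpr (mem_Tc_lt h), h⟩

/-- `a` is global: occurs in at least two chunks. -/
def globF (Ts : List (List ℕ)) (a : ℕ) : Prop := 2 ≤ (QsF Ts a).card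

/-- first chunk of `a`. -/
noncomputable def fqF (Ts : List (List ℕ)) (a : ℕ) : ℕ := sInf {q | a ∈ Tc Ts q}

/-- last chunk of `a`. -/
noncomputable def lqF (Ts : List (List ℕ)) (a : ℕ) : ℕ := sSup {q | a ∈ Tc Ts q}

lemma globF_occ {Ts : List (List ℕ)} {a : ℕ} (h : globF Ts a) : ∃ q, a ∈ Tc Ts q := by
  have : (QsF Ts a).Nonempty := Finset.card_pos.mp
    (lt_of_lt_of_le (by norm_num) (h : 2 ≤ (QsF Ts a).card))
  obtain ⟨q, hq⟩ := this
  exact ⟨q, mem_QsF.mp hq⟩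

lemma occ_bddAbove (Ts : List (List ℕ)) (a : ℕ) : BddAbove {q | a ∈ Tc Ts q} :=
  ⟨Ts.length, fun q hq => le_of_lt (mem_Tc_lt hq)⟩

lemma fqF_mem {Ts : List (List ℕ)} {a q : ℕ} (h : a ∈ Tc Ts q) : a ∈ Tc Ts (fqF Ts a) := by
  have h2 : sInf {q | a ∈ Tc Ts q} ∈ {q | a ∈ Tc Ts q} := Nat.sInf_mem ⟨q, h⟩
  exact h2

lemma lqF_mem {Ts : List (List ℕ)} {a q : ℕ} (h : a ∈ Tc Ts q) : a ∈ Tc Ts (lqF Ts a) := by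
  have h2 : sSup {q | a ∈ Tc Ts q} ∈ {q | a ∈ Tc Ts q} :=
    Nat.sSup_mem ⟨q, h⟩ (occ_bddAbove Ts a)
  exact h2

lemma fqF_le {Ts : List (List ℕ)} {a q : ℕ} (h : a ∈ Tc Ts q) : fqF Ts a ≤ q :=
  Nat.sInf_le h

lemma le_lqF {Ts : List (List ℕ)} {a q : ℕ} (h : a ∈ Tc Ts q) : q ≤ lqF Ts a :=
  le_csSup (occ_bddAbove Ts a) h

lemma globF_fq_lt_lq {Ts : List (List ℕ)} {a : ℕ} (h : globF Ts a) : fqF Ts a < lqF Ts a := by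
  obtain ⟨q₁, hq₁, q₂, hq₂, hne⟩ := Finset.one_lt_card.mp (by exact h)
  rw [mem_QsF] at hq₁ hq₂
  have h1 := fqF_le hq₁
  have h2 := fqF_le hq₂
  have h3 := le_lqF hq₁
  have h4 := le_lqF hq₂
  omega

/-- first-type occurrences, by chunk. -/
noncomputable def FfstL (Ts : List (List ℕ)) : List (List ℕ) :=
  (List.range Ts.length).map
    (fun q => (Tc Ts q).filter (fun a => decide (globF Ts a ∧ fqF Ts a = q)))

/-- last-type occurrences, by chunk. -/
noncomputable def FlstL (Ts : List (List ℕ)) : List (List ℕ) :=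
  (List.range Ts.length).map
    (fun q => (Tc Ts q).filter (fun a => decide (globF Ts a ∧ lqF Ts a = q)))

/-- middle occurrences (relabeled by chunk), by chunk. -/
noncomputable def FmidL (Ts : List (List ℕ)) : List (List ℕ) :=
  (List.range Ts.length).map
    (fun q => ((Tc Ts q).filter
        (fun a => decide (globF Ts a ∧ fqF Ts a < q ∧ q < lqF Ts a))).map
      (fun a => Nat.pair a q))

lemma mem_altList_left {k a b : ℕ} (hk : 1 ≤ k) : a ∈ altList k a b := by
  obtain ⟨k', rfl⟩ : ∃ k', k = k' + 1 := ⟨k - 1, by omega⟩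
  show a ∈ a :: altList k' b a
  simp

lemma mem_altList_right {k a b : ℕ} (hk : 2 ≤ k) : b ∈ altList k a b := by
  obtain ⟨k', rfl⟩ : ∃ k', k = k' + 2 := ⟨k - 2, by omega⟩
  show b ∈ a :: b :: altList k' a b
  simp

lemma map_altList (f : ℕ → ℕ) (k a b : ℕ) :
    (altList k a b).map f = altList k (f a) (f b) := by
  induction k generalizing a b with
  | zero => rfl
  | succ k ih => simp [altList, ih]

/-- order goes down by one on first-type occurrences. -/
lemma Ffst_DS {S : List ℕ} {Ts : List (List ℕ)} (hS : Ts.flatten = S) {s : ℕ} (hs : 1 ≤ s)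
    (hDS : IsDS (s + 1) S) : IsDS s (FfstL Ts).flatten := by
  intro a b hab h
  have hg : ∀ i (hi : i < (FfstL Ts).length), ∀ e ∈ (FfstL Ts)[i], fqF Ts e = i := by
    intro i hi e he
    simp only [FfstL, List.getElem_map, List.getElem_range] at he
    rw [List.mem_filter, decide_eq_true_eq] at he
    exact he.2.2
  obtain ⟨i, hi, hfa, hfb, hsub⟩ := segregation hg (by omega : 3 ≤ s + 2) h
  have hgetEq : (FfstL Ts)[i] =
      (Tc Ts i).filter (fun a => decide (globF Ts a ∧ fqF Ts a = i)) := by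
    simp only [FfstL, List.getElem_map, List.getElem_range]
  have hiT : i < Ts.length := by
    have := hi; simp only [FfstL, List.length_map, List.length_range] at this; exact this
  have hamem : a ∈ (FfstL Ts)[i] := hsub.subset (mem_altList_left (by omega))
  have hbmem : b ∈ (FfstL Ts)[i] := hsub.subset (mem_altList_right (by omega))
  rw [hgetEq, List.mem_filter, decide_eq_true_eq] at hamem hbmem
  -- the extension symbol
  set z := if (s + 2) % 2 = 0 then a else b with hzdef
  have hzprop : globF Ts z ∧ fqF Ts z = i := by
    rw [hzdef]; split
    · exact ⟨hamem.2.1, hamem.2.2⟩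
    · exact ⟨hbmem.2.1, hbmem.2.2⟩
  have hzlt : i < lqF Ts z := by
    have := globF_fq_lt_lq hzprop.1
    omega
  obtain ⟨q₀, hq₀⟩ := globF_occ hzprop.1
  have hzmem : z ∈ Tc Ts (lqF Ts z) := lqF_mem hq₀
  have hlqlt : lqF Ts z < Ts.length := mem_Tc_lt hzmem
  have hsub' : altList (s + 2) a b <+ Ts[i] := by
    refine (hsub.trans ?_)
    rw [hgetEq, ← Tc_eq_getElem hiT]
    exact List.filter_sublist
  have hzsub : [z] <+ Ts[lqF Ts z] := by
    rw [← Tc_eq_getElem hlqlt]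
    exact List.singleton_sublist.mpr hzmem
  have hfull : altList (s + 2) a b ++ [z] <+ Ts.flatten :=
    sublist_flatten_two hzlt hlqlt hsub' hzsub
  rw [hzdef, ← altList_succ_eq, hS] at hfull
  exact hDS a b hab hfull

/-- order goes down by one on last-type occurrences. -/
lemma Flst_DS {S : List ℕ} {Ts : List (List ℕ)} (hS : Ts.flatten = S) {s : ℕ} (hs : 1 ≤ s)
    (hDS : IsDS (s + 1) S) : IsDS s (FlstL Ts).flatten := by
  intro a b hab h
  have hg : ∀ i (hi : i < (FlstL Ts).length), ∀ e ∈ (FlstL Ts)[i], lqF Ts e = i := by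
    intro i hi e he
    simp only [FlstL, List.getElem_map, List.getElem_range] at he
    rw [List.mem_filter, decide_eq_true_eq] at he
    exact he.2.2
  obtain ⟨i, hi, hfa, hfb, hsub⟩ := segregation hg (by omega : 3 ≤ s + 2) h
  have hgetEq : (FlstL Ts)[i] =
      (Tc Ts i).filter (fun a => decide (globF Ts a ∧ lqF Ts a = i)) := by
    simp only [FlstL, List.getElem_map, List.getElem_range]
  have hiT : i < Ts.length := by
    have := hi; simp only [FlstL, List.length_map, List.length_range] at this; exact this
  have hbmem : b ∈ (FlstL Ts)[i] := hsub.subset (mem_altList_right (by omega))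
  rw [hgetEq, List.mem_filter, decide_eq_true_eq] at hbmem
  have hblt : fqF Ts b < i := by
    have := globF_fq_lt_lq hbmem.2.1
    omega
  obtain ⟨q₀, hq₀⟩ := globF_occ hbmem.2.1
  have hbocc : b ∈ Tc Ts (fqF Ts b) := fqF_mem hq₀
  have hsub' : altList (s + 2) a b <+ Ts[i] := by
    refine (hsub.trans ?_)
    rw [hgetEq, ← Tc_eq_getElem hiT]
    exact List.filter_sublist
  have hbsub : [b] <+ Ts[fqF Ts b] := by
    rw [← Tc_eq_getElem (by omega : fqF Ts b < Ts.length)]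
    exact List.singleton_sublist.mpr hbocc
  have hfull : [b] ++ altList (s + 2) a b <+ Ts.flatten :=
    sublist_flatten_two hblt hiT hbsub hsub'
  have heq : [b] ++ altList (s + 2) a b = altList (s + 3) b a := rfl
  rw [heq, hS] at hfull
  exact hDS b a (Ne.symm hab) hfull

/-- order goes down by two on middle occurrences (relabeled per chunk). -/
lemma Fmid_DS {S : List ℕ} {Ts : List (List ℕ)} (hS : Ts.flatten = S) {s : ℕ} (hs : 1 ≤ s)
    (hDS : IsDS (s + 2) S) : IsDS s (FmidL Ts).flatten := by
  intro x y hxy h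
  have hg : ∀ i (hi : i < (FmidL Ts).length), ∀ e ∈ (FmidL Ts)[i], e.unpair.2 = i := by
    intro i hi e he
    simp only [FmidL, List.getElem_map, List.getElem_range] at he
    rw [List.mem_map] at he
    obtain ⟨a, _, rfl⟩ := he
    simp [Nat.unpair_pair]
  obtain ⟨i, hi, hfx, hfy, hsub⟩ := segregation hg (by omega : 3 ≤ s + 2) h
  have hgetEq : (FmidL Ts)[i] =
      ((Tc Ts i).filter
        (fun a => decide (globF Ts a ∧ fqF Ts a < i ∧ i < lqF Ts a))).map
        (fun a => Nat.pair a i) := by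
    simp only [FmidL, List.getElem_map, List.getElem_range]
  have hiT : i < Ts.length := by
    have := hi; simp only [FmidL, List.length_map, List.length_range] at this; exact this
  set a := x.unpair.1 with hadef
  set b := y.unpair.1 with hbdef
  have hxpair : x = Nat.pair a i := by
    rw [hadef, ← hfx, Nat.pair_unpair]
  have hypair : y = Nat.pair b i := by
    rw [hbdef, ← hfy, Nat.pair_unpair]
  have hab : a ≠ b := by
    intro hh; apply hxy; rw [hxpair, hypair, hh]
  -- unmap the alternation
  rw [hgetEq] at hsub
  rw [List.sublist_map_iff] at hsub
  obtain ⟨l', hl', hmap⟩ := hsub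
  have hinj : Function.Injective (fun a => Nat.pair a i) := by
    intro u v huv
    simpa [Nat.pair_eq_pair] using huv
  have hl'eq : l' = altList (s + 2) a b := by
    apply hinj.list_map
    rw [← hmap, map_altList, hxpair, hypair]
  subst hl'eq
  have hamem : a ∈ (Tc Ts i).filter
      (fun a => decide (globF Ts a ∧ fqF Ts a < i ∧ i < lqF Ts a)) :=
    hl'.subset (mem_altList_left (by omega))
  have hbmem : b ∈ (Tc Ts i).filter
      (fun a => decide (globF Ts a ∧ fqF Ts a < i ∧ i < lqF Ts a)) :=
    hl'.subset (mem_altList_right (by omega))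
  rw [List.mem_filter, decide_eq_true_eq] at hamem hbmem
  -- prepend b, append z
  set z := if (s + 3) % 2 = 0 then b else a with hzdef
  have hzprop : globF Ts z ∧ i < lqF Ts z := by
    rw [hzdef]; split
    · exact ⟨hbmem.2.1, hbmem.2.2.2⟩
    · exact ⟨hamem.2.1, hamem.2.2.2⟩
  obtain ⟨qa, hqa⟩ := globF_occ hzprop.1
  have hzmem : z ∈ Tc Ts (lqF Ts z) := lqF_mem hqa
  have hlqlt : lqF Ts z < Ts.length := mem_Tc_lt hzmem
  obtain ⟨qb, hqb⟩ := globF_occ hbmem.2.1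
  have hbocc : b ∈ Tc Ts (fqF Ts b) := fqF_mem hqb
  have hsubT : altList (s + 2) a b <+ Ts[i] := by
    refine hl'.trans ?_
    rw [← Tc_eq_getElem hiT]
    exact List.filter_sublist
  have hbsub : [b] <+ Ts[fqF Ts b] := by
    rw [← Tc_eq_getElem (by omega : fqF Ts b < Ts.length)]
    exact List.singleton_sublist.mpr hbocc
  have hzsub : [z] <+ Ts[lqF Ts z] := by
    rw [← Tc_eq_getElem hlqlt]
    exact List.singleton_sublist.mpr hzmem
  have hfull : [b] ++ (altList (s + 2) a b ++ [z]) <+ Ts.flatten :=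
    sublist_flatten_three hbmem.2.2.1 hzprop.2 hlqlt hbsub hsubT hzsub
  have heq : [b] ++ (altList (s + 2) a b ++ [z]) = altList (s + 4) b a := by
    have h1 : altList (s + 4) b a = altList (s + 3) b a ++ [if (s+3) % 2 = 0 then b else a] :=
      altList_succ_eq (s + 3) b a
    have h2 : altList (s + 3) b a = b :: altList (s + 2) a b := rfl
    rw [h1, h2, hzdef]
    simp
  rw [heq, hS] at hfull
  exact hDS b a (Ne.symm hab) hfull

end DSAux

lemma flatten_map_sublist {l : List ℕ} {f g : ℕ → List ℕ} (h : ∀ q ∈ l, f q <+ g q) :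
    (l.map f).flatten <+ (l.map g).flatten := by
  apply flatten_sublist_flatten
  rw [List.forall₂_map_left_iff, List.forall₂_map_right_iff, List.forall₂_same]
  exact h

lemma list_sum_range (f : ℕ → ℕ) (n : ℕ) :
    ((List.range n).map f).sum = ∑ i ∈ Finset.range n, f i := rfl

lemma flatten_map_length (f : ℕ → List ℕ) (n : ℕ) :
    (((List.range n).map f).flatten).length = ∑ q ∈ Finset.range n, (f q).length := by
  rw [List.length_flatten, List.map_map, list_sum_range]
  rfl

lemma Tc_map_flatten (chunks : List (List (List ℕ))) (q : ℕ) :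
    Tc (chunks.map List.flatten) q = (chunks.getD q []).flatten := by
  rcases lt_or_ge q chunks.length with h | h
  · rw [Tc, List.getD_eq_getElem _ _ (by simpa using h), List.getD_eq_getElem _ _ h,
      List.getElem_map]
  · rw [Tc, List.getD_eq_default _ _ (by simpa using h), List.getD_eq_default _ _ h]
    rfl

lemma pieces_blocked (chunks : List (List (List ℕ))) (m : ℕ)
    (hm : chunks.flatten.length ≤ m)
    (hnd : ∀ B ∈ chunks.flatten, B.Nodup)
    (p : ℕ → ℕ → Bool) (e : ℕ → ℕ → ℕ) (he : ∀ q, Function.Injective (e q)) :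
    Blocked m (((List.range chunks.length).map
      (fun q => ((Tc (chunks.map List.flatten) q).filter (p q)).map (e q))).flatten) := by
  refine ⟨((List.range chunks.length).map
      (fun q => (chunks.getD q []).map (fun B => (B.filter (p q)).map (e q)))).flatten,
      ?_, ?_, ?_⟩
  · -- number of blocks
    rw [List.length_flatten, List.map_map]
    have h1 : ((List.range chunks.length).map
        (List.length ∘ fun q => (chunks.getD q []).map (fun B => (B.filter (p q)).map (e q)))) =
        ((List.range chunks.length).map (fun q => (chunks.getD q []).length)) := by
      apply List.map_congr_left
      intro q _
      simp
    rw [h1]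
    have h2 : ((List.range chunks.length).map (fun q => (chunks.getD q []).length)) =
        chunks.map List.length := by
      conv_rhs => rw [← range_map_getD chunks []]
      rw [List.map_map]
      rfl
    rw [h2, ← List.length_flatten]
    exact hm
  · -- blocks are nodup
    intro B hB
    rw [List.mem_flatten] at hB
    obtain ⟨l, hl, hBl⟩ := hB
    rw [List.mem_map] at hl
    obtain ⟨q, hq, rfl⟩ := hl
    rw [List.mem_map] at hBl
    obtain ⟨B₀, hB₀, rfl⟩ := hBl
    have hqlt : q < chunks.length := by simpa using hq
    have hB₀Bs : B₀ ∈ chunks.flatten := by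
      rw [List.mem_flatten]
      refine ⟨chunks.getD q [], ?_, hB₀⟩
      rw [List.getD_eq_getElem _ _ hqlt]
      exact List.getElem_mem hqlt
    exact List.Nodup.map (he q) (List.Nodup.filter _ (hnd B₀ hB₀Bs))
  · -- flatten equality
    rw [List.flatten_flatten]
    rw [List.map_map]
    congr 1
    apply List.map_congr_left
    intro q _
    simp only [Function.comp]
    rw [Tc_map_flatten, List.filter_flatten, List.map_flatten, List.map_map]
    rfl

/-- Nivasch-style recurrence: for every `s ≥ 3`, `n ≥ 1`, `m ≥ 2`, every `m̂` with
`1 ≤ m̂ < m`, and every partition `m = m₁ + ⋯ + m_{m̂}` into positive parts, there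
is an alphabet partition `n = n̂ + ň₁ + ⋯ + ň_{m̂}` with
`λ_s(n,m) ≤ Σ_q λ_s(ň_q, m_q) + 2·λ_{s−1}(n̂, m) + λ_{s−2}(λ_s(n̂, m̂) − 2n̂, m)`. -/
theorem stmt8 (s n m mh : ℕ) (hs : 3 ≤ s) (hn : 1 ≤ n) (hm : 2 ≤ m)
    (hmh1 : 1 ≤ mh) (hmh2 : mh < m)
    (mq : Fin mh → ℕ) (hmq : ∀ q, 1 ≤ mq q) (hsum : m = ∑ q, mq q) :
    ∃ (nh : ℕ) (nq : Fin mh → ℕ), n = nh + ∑ q, nq q ∧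
      lamB s n m ≤ (∑ q, lamB s (nq q) (mq q)) + 2 * lamB (s - 1) nh m
        + lamB (s - 2) (lamB s nh mh - 2 * nh) m := by
  classical
  obtain ⟨s', rfl⟩ : ∃ s', s = s' + 3 := ⟨s - 3, by omega⟩
  obtain ⟨S, hDS, hcard, hBl, hlen⟩ := lamB_attained (s' + 3) n m
  obtain ⟨Bs0, hBs0len, hBs0nd, hSeq⟩ := hBl
  -- pad the block decomposition to exactly m blocks
  set Bs : List (List ℕ) := Bs0 ++ List.replicate (m - Bs0.length) [] with hBsdef
  have hBslen : Bs.length = m := by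
    rw [hBsdef]; simp; omega
  have hBsnd : ∀ B ∈ Bs, B.Nodup := by
    intro B hB
    rw [hBsdef, List.mem_append] at hB
    rcases hB with h | h
    · exact hBs0nd B h
    · rw [List.eq_of_mem_replicate h]; exact List.nodup_nil
  have hBsfl : Bs.flatten = S := by
    rw [hBsdef, List.flatten_append]
    simp [hSeq.symm]
  -- chunk structure
  set ms : List ℕ := List.ofFn mq with hmsdef
  have hmslen : ms.length = mh := by rw [hmsdef]; simp
  have hmssum : ms.sum = m := by rw [hmsdef, List.sum_ofFn]; exact hsum.symm
  set chunks : List (List (List ℕ)) := splitSz ms Bs with hchdef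
  have hchlen : chunks.length = mh := by rw [hchdef, splitSz_length, hmslen]
  have hchfl : chunks.flatten = Bs := by
    rw [hchdef]; exact splitSz_flatten ms Bs (by rw [hmssum, hBslen])
  set Ts : List (List ℕ) := chunks.map List.flatten with hTsdef
  have hTslen : Ts.length = mh := by rw [hTsdef, List.length_map, hchlen]
  have hTsfl : Ts.flatten = S := by
    rw [hTsdef, ← List.flatten_flatten, hchfl, hBsfl]
  have hTcS : ∀ q, Tc Ts q <+ S := by
    intro q
    rcases lt_or_ge q Ts.length with h | h
    · rw [Tc_eq_getElem h, ← hTsfl]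
      exact sublist_flatten_of_mem (List.getElem_mem h)
    · rw [Tc, List.getD_eq_default _ _ h]; exact List.nil_sublist S
  have hTcmemS : ∀ {a q : ℕ}, a ∈ Tc Ts q → a ∈ S.toFinset := by
    intro a q h
    rw [List.mem_toFinset]
    exact (hTcS q).subset h
  have hchunklen : ∀ (q : Fin mh), (chunks.getD (↑q) []).length = mq q := by
    intro q
    have h1 : (q : ℕ) < chunks.length := by omega
    rw [List.getD_eq_getElem _ _ h1]
    have h2 := splitSz_getElem_length ms Bs (by rw [hmssum, hBslen]) q (by
      rw [hmslen]; exact q.isLt)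
    calc chunks[(q:ℕ)].length
        = ms[(q:ℕ)]'(by rw [hmslen]; exact q.isLt) := h2
      _ = mq q := by
        have h3 := List.getElem_ofFn (f := mq) (i := (q:ℕ)) (by simpa using q.isLt)
        refine (h3 : ms[(q:ℕ)]'(by rw [hmslen]; exact q.isLt) = _).trans ?_
        exact congrArg mq (Fin.eta _ _)
  -- global and local alphabets
  set G : Finset ℕ := S.toFinset.filter (fun a => globF Ts a) with hGdef
  set nh : ℕ := G.card with hnhdef
  set Loc : ℕ → Finset ℕ :=
    fun q => S.toFinset.filter (fun a => ¬ globF Ts a ∧ a ∈ Tc Ts q) with hLocdef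
  have hLocdisj : ∀ q₁ q₂ : ℕ, q₁ ≠ q₂ → Disjoint (Loc q₁) (Loc q₂) := by
    intro q₁ q₂ hne
    rw [Finset.disjoint_left]
    intro a h1 h2
    rw [hLocdef] at h1 h2
    simp only [Finset.mem_filter] at h1 h2
    have hq₁ : q₁ ∈ QsF Ts a := mem_QsF.mpr h1.2.2
    have hq₂ : q₂ ∈ QsF Ts a := mem_QsF.mpr h2.2.2
    have hcard1 : (QsF Ts a).card ≤ 1 := by
      by_contra hc
      exact h1.2.1 (show 2 ≤ (QsF Ts a).card by omega)
    exact hne (Finset.card_le_one.mp hcard1 _ hq₁ _ hq₂)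
  have htotal : nh + ∑ q ∈ Finset.range mh, (Loc q).card ≤ n := by
    have hU : ((Finset.range mh).biUnion Loc).card = ∑ q ∈ Finset.range mh, (Loc q).card :=
      Finset.card_biUnion (fun q₁ _ q₂ _ h => hLocdisj q₁ q₂ h)
    have hdisjGU : Disjoint G ((Finset.range mh).biUnion Loc) := by
      rw [Finset.disjoint_left]
      intro a hG hU'
      rw [Finset.mem_biUnion] at hU'
      obtain ⟨q, _, hq⟩ := hU'
      rw [hGdef] at hG
      rw [hLocdef] at hq
      simp only [Finset.mem_filter] at hG hq
      exact hq.2.1 hG.2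
    have hsub : G ∪ (Finset.range mh).biUnion Loc ⊆ S.toFinset := by
      intro a ha
      rw [Finset.mem_union] at ha
      rcases ha with h | h
      · rw [hGdef] at h; exact (Finset.mem_filter.mp h).1
      · rw [Finset.mem_biUnion] at h
        obtain ⟨q, _, hq⟩ := h
        rw [hLocdef] at hq
        exact (Finset.mem_filter.mp hq).1
    calc nh + ∑ q ∈ Finset.range mh, (Loc q).card
        = (G ∪ (Finset.range mh).biUnion Loc).card := by
          rw [Finset.card_union_of_disjoint hdisjGU, hU, hnhdef]
      _ ≤ S.toFinset.card := Finset.card_le_card hsub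
      _ ≤ n := hcard
  obtain ⟨d, hd⟩ : ∃ d, n = nh + ∑ q ∈ Finset.range mh, (Loc q).card + d :=
    ⟨n - (nh + ∑ q ∈ Finset.range mh, (Loc q).card), by omega⟩
  refine ⟨nh, fun q => (Loc (↑q)).card + (if q = ⟨0, hmh1⟩ then d else 0), ?_, ?_⟩
  · -- the alphabet partition
    have h1 : ∑ q : Fin mh, ((Loc (↑q)).card + (if q = ⟨0, hmh1⟩ then d else 0))
        = (∑ q : Fin mh, (Loc (↑q)).card) + ∑ q : Fin mh, (if q = ⟨0, hmh1⟩ then d else 0) :=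
      Finset.sum_add_distrib
    have h2 : ∑ q : Fin mh, (if q = ⟨0, hmh1⟩ then d else 0) = d := by
      rw [Finset.sum_ite_eq' Finset.univ (⟨0, hmh1⟩ : Fin mh) (fun _ => d)]
      simp
    have h3 : ∑ q : Fin mh, (Loc (↑q)).card = ∑ q ∈ Finset.range mh, (Loc q).card :=
      Fin.sum_univ_eq_sum_range (fun i => (Loc i).card) mh
    rw [h1, h2, h3]
    omega
  -- the length bound
  simp only [show s' + 3 - 1 = s' + 2 from by omega, show s' + 3 - 2 = s' + 1 from by omega]
  -- lengths of the three global pieces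
  have hFfstlen : ((FfstL Ts).flatten).length = ∑ q ∈ Finset.range mh,
      ((Tc Ts q).filter (fun a => decide (globF Ts a ∧ fqF Ts a = q))).length := by
    simp only [FfstL]
    rw [hTslen, flatten_map_length]
  have hFlstlen : ((FlstL Ts).flatten).length = ∑ q ∈ Finset.range mh,
      ((Tc Ts q).filter (fun a => decide (globF Ts a ∧ lqF Ts a = q))).length := by
    simp only [FlstL]
    rw [hTslen, flatten_map_length]
  have hFmidlen : ((FmidL Ts).flatten).length = ∑ q ∈ Finset.range mh,
      ((Tc Ts q).filter
        (fun a => decide (globF Ts a ∧ fqF Ts a < q ∧ q < lqF Ts a))).length := by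
    simp only [FmidL]
    rw [hTslen, flatten_map_length]
    exact Finset.sum_congr rfl (fun q _ => List.length_map _)
  -- split the length of S chunkwise into the four classes
  have hsplit : S.length ≤ (∑ q ∈ Finset.range mh,
        ((Tc Ts q).filter (fun a => decide (¬ globF Ts a))).length)
      + ((FfstL Ts).flatten.length + (FlstL Ts).flatten.length + (FmidL Ts).flatten.length) := by
    have hS' : S.length = ∑ q ∈ Finset.range mh, (Tc Ts q).length := by
      rw [← hTsfl]
      conv_lhs => rw [← range_map_getD Ts [], hTslen]
      exact flatten_map_length _ _
    rw [hS', hFfstlen, hFlstlen, hFmidlen, ← Finset.sum_add_distrib,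
      ← Finset.sum_add_distrib, ← Finset.sum_add_distrib]
    apply Finset.sum_le_sum
    intro q _
    rw [← List.countP_eq_length_filter, ← List.countP_eq_length_filter,
      ← List.countP_eq_length_filter, ← List.countP_eq_length_filter]
    have h1 := List.length_eq_countP_add_countP (fun a => decide (globF Ts a)) (l := Tc Ts q)
    have h2 : List.countP (fun a => decide (¬ (decide (globF Ts a)) = true)) (Tc Ts q)
        = List.countP (fun a => decide (¬ globF Ts a)) (Tc Ts q) :=
      List.countP_congr (by intro x _; simp)
    have h3 : List.countP (fun a => decide (globF Ts a)) (Tc Ts q) ≤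
        List.countP (fun a => decide (globF Ts a ∧ fqF Ts a = q)) (Tc Ts q) +
        (List.countP (fun a => decide (globF Ts a ∧ lqF Ts a = q)) (Tc Ts q) +
        List.countP (fun a => decide (globF Ts a ∧ fqF Ts a < q ∧ q < lqF Ts a)) (Tc Ts q)) := by
      have hmono : List.countP (fun a => decide (globF Ts a)) (Tc Ts q) ≤
          List.countP (fun a => decide (globF Ts a ∧ fqF Ts a = q)
            || (decide (globF Ts a ∧ lqF Ts a = q)
              || decide (globF Ts a ∧ fqF Ts a < q ∧ q < lqF Ts a))) (Tc Ts q) := by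
        apply List.countP_mono_left
        intro a ha hga
        rw [decide_eq_true_eq] at hga
        have hfle : fqF Ts a ≤ q := fqF_le ha
        have hlge : q ≤ lqF Ts a := le_lqF ha
        simp only [Bool.or_eq_true, decide_eq_true_eq]
        rcases eq_or_lt_of_le hfle with hfe | hflt
        · exact Or.inl ⟨hga, hfe⟩
        rcases eq_or_lt_of_le hlge with hle | hllt
        · exact Or.inr (Or.inl ⟨hga, hle.symm⟩)
        exact Or.inr (Or.inr ⟨hga, hflt, hllt⟩)
      exact hmono.trans ((countP_or_le _ _ _).trans
        (add_le_add_right (countP_or_le _ _ _) _))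
    omega
  -- local contributions
  have hlocsum : ∑ q ∈ Finset.range mh,
        ((Tc Ts q).filter (fun a => decide (¬ globF Ts a))).length
      ≤ ∑ q : Fin mh, lamB (s' + 3)
          ((Loc (↑q)).card + (if q = ⟨0, hmh1⟩ then d else 0)) (mq q) := by
    rw [← Fin.sum_univ_eq_sum_range
      (fun i => ((Tc Ts i).filter (fun a => decide (¬ globF Ts a))).length) mh]
    apply Finset.sum_le_sum
    intro q _
    apply le_lamB
    · exact hDS.sublist (List.filter_sublist.trans (hTcS (↑q)))
    · have hsub : ((Tc Ts (↑q)).filter (fun a => decide (¬ globF Ts a))).toFinset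
          ⊆ Loc (↑q) := by
        intro a ha
        rw [List.mem_toFinset, List.mem_filter, decide_eq_true_eq] at ha
        rw [hLocdef, Finset.mem_filter]
        exact ⟨hTcmemS ha.1, ha.2, ha.1⟩
      calc ((Tc Ts (↑q)).filter (fun a => decide (¬ globF Ts a))).toFinset.card
          ≤ (Loc (↑q)).card := Finset.card_le_card hsub
        _ ≤ _ := Nat.le_add_right _ _
    · refine ⟨(chunks.getD (↑q) []).map
        (fun B => B.filter (fun a => decide (¬ globF Ts a))), ?_, ?_, ?_⟩
      · rw [List.length_map, hchunklen q]
      · intro B hB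
        rw [List.mem_map] at hB
        obtain ⟨B₀, hB₀, rfl⟩ := hB
        have hB₀Bs : B₀ ∈ Bs := by
          rw [← hchfl, List.mem_flatten]
          refine ⟨chunks.getD (↑q) [], ?_, hB₀⟩
          rw [List.getD_eq_getElem _ _ (show (q:ℕ) < chunks.length by omega)]
          exact List.getElem_mem _
        exact List.Nodup.filter _ (hBsnd B₀ hB₀Bs)
      · rw [hTsdef, Tc_map_flatten, List.filter_flatten]
  -- first-type occurrences
  have hFfst : (FfstL Ts).flatten.length ≤ lamB (s' + 2) nh m := by
    apply le_lamB
    · exact Ffst_DS hTsfl (by omega) hDS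
    · have hsub : ((FfstL Ts).flatten).toFinset ⊆ G := by
        intro a ha
        rw [List.mem_toFinset, List.mem_flatten] at ha
        obtain ⟨l, hl, hal⟩ := ha
        simp only [FfstL, List.mem_map, List.mem_range] at hl
        obtain ⟨q, hq, rfl⟩ := hl
        rw [List.mem_filter, decide_eq_true_eq] at hal
        rw [hGdef, Finset.mem_filter]
        exact ⟨hTcmemS hal.1, hal.2.1⟩
      rw [hnhdef]
      exact Finset.card_le_card hsub
    · have hb := pieces_blocked chunks m (by rw [hchfl, hBslen])
        (by rw [hchfl]; exact hBsnd)
        (fun q a => decide (globF Ts a ∧ fqF Ts a = q)) (fun _ a => a)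
        (fun _ u v h => h)
      rw [← hTsdef] at hb
      simp only [List.map_id'] at hb
      rw [show chunks.length = Ts.length by rw [hchlen, hTslen]] at hb
      simpa only [FfstL] using hb
  -- last-type occurrences
  have hFlst : (FlstL Ts).flatten.length ≤ lamB (s' + 2) nh m := by
    apply le_lamB
    · exact Flst_DS hTsfl (by omega) hDS
    · have hsub : ((FlstL Ts).flatten).toFinset ⊆ G := by
        intro a ha
        rw [List.mem_toFinset, List.mem_flatten] at ha
        obtain ⟨l, hl, hal⟩ := ha
        simp only [FlstL, List.mem_map, List.mem_range] at hl
        obtain ⟨q, hq, rfl⟩ := hl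
        rw [List.mem_filter, decide_eq_true_eq] at hal
        rw [hGdef, Finset.mem_filter]
        exact ⟨hTcmemS hal.1, hal.2.1⟩
      rw [hnhdef]
      exact Finset.card_le_card hsub
    · have hb := pieces_blocked chunks m (by rw [hchfl, hBslen])
        (by rw [hchfl]; exact hBsnd)
        (fun q a => decide (globF Ts a ∧ lqF Ts a = q)) (fun _ a => a)
        (fun _ u v h => h)
      rw [← hTsdef] at hb
      simp only [List.map_id'] at hb
      rw [show chunks.length = Ts.length by rw [hchlen, hTslen]] at hb
      simpa only [FlstL] using hb
  -- middle occurrences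
  have hFmid : (FmidL Ts).flatten.length
      ≤ lamB (s' + 1) (lamB (s' + 3) nh mh - 2 * nh) m := by
    apply le_lamB
    · exact Fmid_DS hTsfl (by omega) hDS
    · -- alphabet bound via the sequence of chunk incidences
      have hShsub : ((List.range mh).map
          (fun q => ((Tc Ts q).filter (fun a => decide (globF Ts a))).dedup)).flatten <+ S := by
        rw [← hTsfl]
        conv_rhs => rw [← range_map_getD Ts [], hTslen]
        apply flatten_map_sublist
        intro q _
        exact (List.dedup_sublist _).trans List.filter_sublist
      have hShle : (((List.range mh).map
          (fun q => ((Tc Ts q).filter (fun a => decide (globF Ts a))).dedup)).flatten).length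
          ≤ lamB (s' + 3) nh mh := by
        apply le_lamB
        · exact hDS.sublist hShsub
        · have hsub : (((List.range mh).map
              (fun q => ((Tc Ts q).filter (fun a => decide (globF Ts a))).dedup)).flatten).toFinset
              ⊆ G := by
            intro a ha
            rw [List.mem_toFinset, List.mem_flatten] at ha
            obtain ⟨l, hl, hal⟩ := ha
            simp only [List.mem_map, List.mem_range] at hl
            obtain ⟨q, hq, rfl⟩ := hl
            rw [List.mem_dedup, List.mem_filter, decide_eq_true_eq] at hal
            rw [hGdef, Finset.mem_filter]
            exact ⟨hTcmemS hal.1, hal.2⟩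
          rw [hnhdef]
          exact Finset.card_le_card hsub
        · refine ⟨(List.range mh).map
            (fun q => ((Tc Ts q).filter (fun a => decide (globF Ts a))).dedup), ?_, ?_, rfl⟩
          · simp
          · intro B hB
            rw [List.mem_map] at hB
            obtain ⟨q, _, rfl⟩ := hB
            exact List.nodup_dedup _
      have hShlen : (((List.range mh).map
          (fun q => ((Tc Ts q).filter (fun a => decide (globF Ts a))).dedup)).flatten).length
          = ∑ a ∈ G, (QsF Ts a).card := by
        rw [flatten_map_length]
        have hstep : ∀ q ∈ Finset.range mh,
            (((Tc Ts q).filter (fun a => decide (globF Ts a))).dedup).length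
            = (G.filter (fun a => a ∈ Tc Ts q)).card := by
          intro q _
          rw [← List.card_toFinset]
          congr 1
          ext a
          rw [List.mem_toFinset, List.mem_filter, decide_eq_true_eq, hGdef,
            Finset.mem_filter, Finset.mem_filter]
          constructor
          · rintro ⟨h1, h2⟩; exact ⟨⟨hTcmemS h1, h2⟩, h1⟩
          · rintro ⟨⟨_, h2⟩, h3⟩; exact ⟨h3, h2⟩
        rw [Finset.sum_congr rfl hstep]
        have hswap : ∑ q ∈ Finset.range mh, (G.filter (fun a => a ∈ Tc Ts q)).card
            = ∑ a ∈ G, ((Finset.range mh).filter (fun q => a ∈ Tc Ts q)).card := by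
          simp only [Finset.card_filter]
          exact Finset.sum_comm
        rw [hswap]
        apply Finset.sum_congr rfl
        intro a _
        congr 1
        rw [QsF, hTslen]
      -- the middle alphabet is small
      have hMsub : (FmidL Ts).flatten.toFinset.card
          ≤ ∑ q ∈ Finset.range mh, ((Tc Ts q).filter
            (fun a => decide (globF Ts a ∧ fqF Ts a < q ∧ q < lqF Ts a))).toFinset.card := by
        calc (FmidL Ts).flatten.toFinset.card
            ≤ ((FmidL Ts).map (fun l => l.toFinset.card)).sum :=
              card_toFinset_flatten_le _
          _ = ∑ q ∈ Finset.range mh, (((Tc Ts q).filter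
                (fun a => decide (globF Ts a ∧ fqF Ts a < q ∧ q < lqF Ts a))).map
                (fun a => Nat.pair a q)).toFinset.card := by
              simp only [FmidL, hTslen, List.map_map]
              rw [list_sum_range]
              rfl
          _ ≤ _ := Finset.sum_le_sum (fun q _ => toFinset_map_card_le _ _)
      have hMcount : ∑ q ∈ Finset.range mh, ((Tc Ts q).filter
            (fun a => decide (globF Ts a ∧ fqF Ts a < q ∧ q < lqF Ts a))).toFinset.card
          = ∑ a ∈ G, ((QsF Ts a).card - 2) := by
        have hstep : ∀ q ∈ Finset.range mh, ((Tc Ts q).filter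
            (fun a => decide (globF Ts a ∧ fqF Ts a < q ∧ q < lqF Ts a))).toFinset.card
            = (G.filter (fun a => a ∈ Tc Ts q ∧ fqF Ts a < q ∧ q < lqF Ts a)).card := by
          intro q _
          congr 1
          ext a
          rw [List.mem_toFinset, List.mem_filter, decide_eq_true_eq, hGdef,
            Finset.mem_filter, Finset.mem_filter]
          constructor
          · rintro ⟨h1, h2, h3, h4⟩; exact ⟨⟨hTcmemS h1, h2⟩, h1, h3, h4⟩
          · rintro ⟨⟨_, h2⟩, h3, h4, h5⟩; exact ⟨h3, h2, h4, h5⟩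
        rw [Finset.sum_congr rfl hstep]
        have hswap : ∑ q ∈ Finset.range mh,
            (G.filter (fun a => a ∈ Tc Ts q ∧ fqF Ts a < q ∧ q < lqF Ts a)).card
            = ∑ a ∈ G, ((Finset.range mh).filter
              (fun q => a ∈ Tc Ts q ∧ fqF Ts a < q ∧ q < lqF Ts a)).card := by
          simp only [Finset.card_filter]
          exact Finset.sum_comm
        rw [hswap]
        apply Finset.sum_congr rfl
        intro a haG
        rw [hGdef, Finset.mem_filter] at haG
        have hglob : globF Ts a := haG.2
        have hQeq : (Finset.range mh).filter
            (fun q => a ∈ Tc Ts q ∧ fqF Ts a < q ∧ q < lqF Ts a)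
            = (QsF Ts a).filter (fun q => fqF Ts a < q ∧ q < lqF Ts a) := by
          rw [QsF, hTslen, Finset.filter_filter]
        rw [hQeq]
        -- remove the two extreme chunks
        obtain ⟨q₀, hq₀⟩ := globF_occ hglob
        have hfmem : fqF Ts a ∈ QsF Ts a := mem_QsF.mpr (fqF_mem hq₀)
        have hlmem : lqF Ts a ∈ QsF Ts a := mem_QsF.mpr (lqF_mem hq₀)
        have hflt : fqF Ts a < lqF Ts a := globF_fq_lt_lq hglob
        have hneg : (QsF Ts a).filter (fun q => ¬ (fqF Ts a < q ∧ q < lqF Ts a))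
            = {fqF Ts a, lqF Ts a} := by
          ext q
          rw [Finset.mem_filter, Finset.mem_insert, Finset.mem_singleton]
          constructor
          · rintro ⟨hq, hnq⟩
            have h1 : fqF Ts a ≤ q := fqF_le (mem_QsF.mp hq)
            have h2 : q ≤ lqF Ts a := le_lqF (mem_QsF.mp hq)
            omega
          · rintro (rfl | rfl)
            · exact ⟨hfmem, by omega⟩
            · exact ⟨hlmem, by omega⟩
        have hcard2 : ({fqF Ts a, lqF Ts a} : Finset ℕ).card = 2 :=
          Finset.card_pair (by omega)
        have := Finset.card_filter_add_card_filter_not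
          (s := QsF Ts a) (fun q => fqF Ts a < q ∧ q < lqF Ts a)
        rw [hneg, hcard2] at this
        omega
      have hsum2 : (∑ a ∈ G, ((QsF Ts a).card - 2)) + 2 * nh = ∑ a ∈ G, (QsF Ts a).card := by
        rw [hnhdef, Nat.mul_comm, ← Finset.sum_const_nat (m := 2) (fun a _ => rfl),
          ← Finset.sum_add_distrib]
        apply Finset.sum_congr rfl
        intro a haG
        rw [hGdef, Finset.mem_filter] at haG
        have : 2 ≤ (QsF Ts a).card := haG.2
        omega
      omega
    · have hb := pieces_blocked chunks m (by rw [hchfl, hBslen])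
        (by rw [hchfl]; exact hBsnd)
        (fun q a => decide (globF Ts a ∧ fqF Ts a < q ∧ q < lqF Ts a))
        (fun q a => Nat.pair a q)
        (fun q u v h => (Nat.pair_eq_pair.mp h).1)
      rw [← hTsdef] at hb
      rw [show chunks.length = Ts.length by rw [hchlen, hTslen]] at hb
      simpa only [FmidL] using hb
  -- put everything together
  have hfin : S.length = lamB (s' + 3) n m := hlen
  omega
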